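/- Let 1 ≤ q < p and let λ_1 ≥ ... ≥ λ_p ≥ 0 with λ_l > 0 for l ≤ q and λ_l = 0 for l > q. Suppose λ̂_n,l² = λ_l² + O(n^{-1/2}) for l ≤ q and λ̂_n,l² = O(n^{-1}) for l > q, and set c_n = log(n)/n. Then for every l < q, the limit of (λ̂_n,q+1² + c_n)/(λ̂_n,q² + c_n) − (λ̂_n,l+1² + c_n)/(λ̂_n,l² + c_n) equals −λ_{l+1}²/λ_l² < 0, and for every l with q < l ≤ p−1, the limit of (λ̂_n,q+1² + c_n)/(λ̂_n,q² + c_n) − (λ̂_n,l+1² + c_n)/(λ̂_n,l² + c_n) equals −1. Consequently, for all sufficiently large n, the ratio (λ̂_n,i+1² + c_n)/(λ̂_n,i² + c_n) is minimized at i = q. -/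

import Mathlib

open Filter Asymptotics

private lemma div_div_aux (a b c : ℝ) (hc : c ≠ 0) : a / c / (b / c) = a / b :=
  div_div_div_cancel_right₀ hc a b

/-- Deterministic consistency of the MRER estimator under the alternative (Lemma 1(ii)):
with eigenvalues `λ_1 ≥ … ≥ λ_p`, positive for `l ≤ q` and zero for `l > q`, squared
eigenvalue estimates accurate at the stated rates, and ridge `c n = log n / n`,
the difference between the ratio at `q` and at `l ≠ q` converges to a negative limit
(`-λ_{l+1}²/λ_l²` for `l < q`, `-1` for `l > q`), and eventually the ratio is minimized
at `i = q`. -/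
theorem stmt_1 (p q : ℕ) (hq1 : 1 ≤ q) (hqp : q < p) (lam : ℕ → ℝ) (hat : ℕ → ℕ → ℝ)
    (hmono : ∀ i j, 1 ≤ i → i ≤ j → j ≤ p → lam j ≤ lam i)
    (hnonneg : ∀ i, 1 ≤ i → i ≤ p → 0 ≤ lam i)
    (hpos : ∀ l, 1 ≤ l → l ≤ q → 0 < lam l)
    (hzero : ∀ l, q < l → l ≤ p → lam l = 0)
    (h1 : ∀ l, 1 ≤ l → l ≤ q →
      (fun n => hat n l ^ 2 - lam l ^ 2) =O[atTop] fun n : ℕ => (n : ℝ) ^ (-(1/2 : ℝ)))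
    (h2 : ∀ l, q < l → l ≤ p → (fun n => hat n l ^ 2) =O[atTop] fun n : ℕ => (n : ℝ)⁻¹)
    (c : ℕ → ℝ) (hc : ∀ n, c n = Real.log n / n) :
    (∀ l, 1 ≤ l → l < q →
      Tendsto (fun n => (hat n (q + 1) ^ 2 + c n) / (hat n q ^ 2 + c n)
          - (hat n (l + 1) ^ 2 + c n) / (hat n l ^ 2 + c n)) atTop
        (nhds (-(lam (l + 1) ^ 2 / lam l ^ 2))) ∧ -(lam (l + 1) ^ 2 / lam l ^ 2) < 0) ∧
    (∀ l, q < l → l + 1 ≤ p →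
      Tendsto (fun n => (hat n (q + 1) ^ 2 + c n) / (hat n q ^ 2 + c n)
          - (hat n (l + 1) ^ 2 + c n) / (hat n l ^ 2 + c n)) atTop (nhds (-1))) ∧
    (∀ᶠ n in atTop, ∀ i, 1 ≤ i → i + 1 ≤ p → i ≠ q →
      (hat n (q + 1) ^ 2 + c n) / (hat n q ^ 2 + c n)
        < (hat n (i + 1) ^ 2 + c n) / (hat n i ^ 2 + c n)) := by
  -- basics about c
  have hcpos : ∀ᶠ n : ℕ in atTop, 0 < c n := by
    filter_upwards [eventually_ge_atTop 2] with n hn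
    rw [hc]
    have hn1 : (1 : ℝ) < (n : ℝ) := by exact_mod_cast lt_of_lt_of_le one_lt_two hn
    exact div_pos (Real.log_pos hn1) (by linarith)
  have hc0 : Tendsto c atTop (nhds 0) := by
    have h := (Real.tendsto_pow_log_div_mul_add_atTop 1 0 1 one_ne_zero).comp
      tendsto_natCast_atTop_atTop
    refine h.congr fun n => ?_
    simp [hc n]
  -- limits of estimates for l ≤ q
  have hA : ∀ l, 1 ≤ l → l ≤ q →
      Tendsto (fun n => hat n l ^ 2 + c n) atTop (nhds (lam l ^ 2)) := by
    intro l hl1 hlq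
    have hr : Tendsto (fun n : ℕ => (n : ℝ) ^ (-(1/2 : ℝ))) atTop (nhds 0) :=
      (tendsto_rpow_neg_atTop (by norm_num)).comp tendsto_natCast_atTop_atTop
    have h0 : Tendsto (fun n => hat n l ^ 2 - lam l ^ 2) atTop (nhds 0) :=
      (h1 l hl1 hlq).trans_tendsto hr
    have h0' : Tendsto (fun n => hat n l ^ 2) atTop (nhds (lam l ^ 2)) := by
      have := h0.add_const (lam l ^ 2)
      simpa using this
    simpa using h0'.add hc0
  -- for l > q, estimate is small compared to c
  have hB : ∀ l, q < l → l ≤ p →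
      Tendsto (fun n => (hat n l ^ 2 + c n) / c n) atTop (nhds 1) := by
    intro l hql hlp
    have hsmall : Tendsto (fun n => hat n l ^ 2 / c n) atTop (nhds 0) := by
      have hO : (fun n => hat n l ^ 2 / c n) =O[atTop] fun n : ℕ => (n : ℝ)⁻¹ / c n := by
        simpa [div_eq_mul_inv] using (h2 l hql hlp).mul
          (isBigO_refl (fun n : ℕ => (c n)⁻¹) atTop)
      have heq : (fun n : ℕ => (n : ℝ)⁻¹ / c n) =ᶠ[atTop] fun n : ℕ => (Real.log n)⁻¹ := by
        filter_upwards [eventually_ge_atTop 2] with n hn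
        have hn1 : (1 : ℝ) < (n : ℝ) := by exact_mod_cast lt_of_lt_of_le one_lt_two hn
        have hlog : Real.log n ≠ 0 := ne_of_gt (Real.log_pos hn1)
        have hn0 : (n : ℝ) ≠ 0 := by positivity
        rw [hc]
        field_simp
      have hlim : Tendsto (fun n : ℕ => (n : ℝ)⁻¹ / c n) atTop (nhds 0) := by
        refine Tendsto.congr' heq.symm ?_
        exact (Real.tendsto_log_atTop.comp tendsto_natCast_atTop_atTop).inv_tendsto_atTop
      exact hO.trans_tendsto hlim
    have : Tendsto (fun n => hat n l ^ 2 / c n + 1) atTop (nhds 1) := by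
      simpa using hsmall.add_const 1
    refine this.congr' ?_
    filter_upwards [hcpos] with n hn
    rw [add_div, div_self (ne_of_gt hn)]
  -- the ratio at q tends to 0
  have hRq : Tendsto (fun n => (hat n (q + 1) ^ 2 + c n) / (hat n q ^ 2 + c n)) atTop
      (nhds 0) := by
    have hnum : Tendsto (fun n => hat n (q + 1) ^ 2 + c n) atTop (nhds 0) := by
      have hinv : Tendsto (fun n : ℕ => (n : ℝ)⁻¹) atTop (nhds 0) :=
        tendsto_inv_atTop_nhds_zero_nat
      have := (h2 (q + 1) (Nat.lt_succ_self q) hqp).trans_tendsto hinv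
      simpa using this.add hc0
    have hden := hA q hq1 le_rfl
    have hlq := hpos q hq1 le_rfl
    have hne : lam q ^ 2 ≠ 0 := by positivity
    have := hnum.div hden hne
    rw [zero_div] at this
    exact this
  -- ratio at l for 1 ≤ l < q
  have hRl : ∀ l, 1 ≤ l → l < q →
      Tendsto (fun n => (hat n (l + 1) ^ 2 + c n) / (hat n l ^ 2 + c n)) atTop
        (nhds (lam (l + 1) ^ 2 / lam l ^ 2)) := by
    intro l hl1 hlq
    have hne : lam l ^ 2 ≠ 0 := by
      have := hpos l hl1 hlq.le; positivity
    exact (hA (l + 1) (by omega) (by omega)).div (hA l hl1 hlq.le) hne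
  -- ratio at l for q < l, l+1 ≤ p
  have hRg : ∀ l, q < l → l + 1 ≤ p →
      Tendsto (fun n => (hat n (l + 1) ^ 2 + c n) / (hat n l ^ 2 + c n)) atTop (nhds 1) := by
    intro l hql hlp
    have h1' := hB (l + 1) (by omega) hlp
    have h2' := hB l hql (by omega)
    have := h1'.div h2' one_ne_zero
    rw [div_one] at this
    refine this.congr' ?_
    filter_upwards [hcpos] with n hn
    exact div_div_aux _ _ _ (ne_of_gt hn)
  -- first conclusion
  have concl1 : ∀ l, 1 ≤ l → l < q →
      Tendsto (fun n => (hat n (q + 1) ^ 2 + c n) / (hat n q ^ 2 + c n)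
          - (hat n (l + 1) ^ 2 + c n) / (hat n l ^ 2 + c n)) atTop
        (nhds (-(lam (l + 1) ^ 2 / lam l ^ 2))) ∧ -(lam (l + 1) ^ 2 / lam l ^ 2) < 0 := by
    intro l hl1 hlq
    constructor
    · have := hRq.sub (hRl l hl1 hlq)
      simpa using this
    · have h1' := hpos (l + 1) (by omega) (by omega)
      have h2' := hpos l hl1 hlq.le
      have : 0 < lam (l + 1) ^ 2 / lam l ^ 2 := by positivity
      linarith
  -- second conclusion
  have concl2 : ∀ l, q < l → l + 1 ≤ p →
      Tendsto (fun n => (hat n (q + 1) ^ 2 + c n) / (hat n q ^ 2 + c n)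
          - (hat n (l + 1) ^ 2 + c n) / (hat n l ^ 2 + c n)) atTop (nhds (-1)) := by
    intro l hql hlp
    have := hRq.sub (hRg l hql hlp)
    simpa using this
  refine ⟨concl1, concl2, ?_⟩
  -- eventual minimization
  have key : ∀ i : ℕ, ∀ᶠ n in atTop, (1 ≤ i → i + 1 ≤ p → i ≠ q →
      (hat n (q + 1) ^ 2 + c n) / (hat n q ^ 2 + c n)
        < (hat n (i + 1) ^ 2 + c n) / (hat n i ^ 2 + c n)) := by
    intro i
    by_cases hi1 : 1 ≤ i
    · by_cases hip : i + 1 ≤ p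
      · by_cases hiq : i = q
        · exact Eventually.of_forall fun n h1 h2 h3 => absurd hiq h3
        · have hlt : ∀ᶠ n in atTop,
              (hat n (q + 1) ^ 2 + c n) / (hat n q ^ 2 + c n)
                - (hat n (i + 1) ^ 2 + c n) / (hat n i ^ 2 + c n) < 0 := by
            rcases lt_or_gt_of_ne hiq with h | h
            · exact ((concl1 i hi1 h).1).eventually_lt_const (concl1 i hi1 h).2
            · exact (concl2 i h hip).eventually_lt_const (by norm_num)
          filter_upwards [hlt] with n hn _ _ _
          linarith
      · exact Eventually.of_forall fun n h1 h2 h3 => absurd h2 hip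
    · exact Eventually.of_forall fun n h1 h2 h3 => absurd h1 hi1
  have hall : ∀ᶠ n in atTop, ∀ i ∈ Finset.range p, (1 ≤ i → i + 1 ≤ p → i ≠ q →
      (hat n (q + 1) ^ 2 + c n) / (hat n q ^ 2 + c n)
        < (hat n (i + 1) ^ 2 + c n) / (hat n i ^ 2 + c n)) :=
    (eventually_all_finset (Finset.range p)).mpr fun i _ => key i
  filter_upwards [hall] with n hn i hi1 hip hiq
  exact hn i (Finset.mem_range.mpr (by omega)) hi1 hip hiq
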